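/- Let a : ℕ → ℕ (indexed from 1) satisfy: a(1) = 1, a(2) = 2, and for every n ≥ 2, a(n+1) is the smallest positive integer not among a(1), …, a(n) whose greatest common divisor with a(n) exceeds 1. Then every positive integer occurs in the sequence, i.e., for every m ≥ 1 there exists n ≥ 1 with a(n) = m; consequently a is a bijection from the positive integers onto the positive integers. -/
import Mathlib


/-- The EKG sequence property: `a 1 = 1`, `a 2 = 2`, and for `n ≥ 2`,
`a (n+1)` is the smallest positive integer not among `a 1, …, a n`
whose gcd with `a n` exceeds 1. -/
def IsEKG (a : ℕ → ℕ) : Prop :=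
  a 1 = 1 ∧ a 2 = 2 ∧
    ∀ n, 2 ≤ n →
      IsLeast {m : ℕ | 0 < m ∧ (∀ i, 1 ≤ i → i ≤ n → a i ≠ m) ∧
        1 < Nat.gcd m (a n)} (a (n + 1))

section EKGAux

variable {a : ℕ → ℕ}

lemma ekg_mem (ha : IsEKG a) {n : ℕ} (hn : 2 ≤ n) :
    0 < a (n + 1) ∧ (∀ i, 1 ≤ i → i ≤ n → a i ≠ a (n + 1)) ∧
      1 < Nat.gcd (a (n + 1)) (a n) :=
  (ha.2.2 n hn).1

lemma ekg_pos (ha : IsEKG a) {n : ℕ} (hn : 1 ≤ n) : 0 < a n := by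
  match n, hn with
  | 1, _ => rw [ha.1]; norm_num
  | 2, _ => rw [ha.2.1]; norm_num
  | (k + 3), _ => exact (ekg_mem ha (show 2 ≤ k + 2 by omega)).1

lemma ekg_inj (ha : IsEKG a) {i j : ℕ} (hi : 1 ≤ i) (hij : i < j) : a i ≠ a j := by
  rcases Nat.lt_or_ge j 3 with h | h
  · have hj2 : j = 2 := by omega
    have hi1 : i = 1 := by omega
    subst hj2; subst hi1
    rw [ha.1, ha.2.1]; norm_num
  · obtain ⟨k, rfl⟩ : ∃ k, j = k + 3 := ⟨j - 3, by omega⟩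
    exact (ekg_mem ha (show 2 ≤ k + 2 by omega)).2.1 i hi (by omega)

lemma ekg_two_le (ha : IsEKG a) {n : ℕ} (hn : 3 ≤ n) : 2 ≤ a n := by
  obtain ⟨k, rfl⟩ : ∃ k, n = k + 3 := ⟨n - 3, by omega⟩
  have h : 1 < Nat.gcd (a (k + 3)) (a (k + 2)) :=
    (ekg_mem ha (show 2 ≤ k + 2 by omega)).2.2
  have hd : Nat.gcd (a (k + 3)) (a (k + 2)) ∣ a (k + 3) := Nat.gcd_dvd_left _ _
  have hp : 0 < a (k + 3) := ekg_pos ha (by omega)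
  have := Nat.le_of_dvd hp hd
  omega

/-- Only finitely many terms are below any bound. -/
lemma ekg_gt (ha : IsEKG a) (D : ℕ) : ∃ N, ∀ n, N ≤ n → D < a n := by
  have hfin : {n : ℕ | 1 ≤ n ∧ a n ≤ D}.Finite := by
    apply Set.Finite.of_finite_image (f := a)
    · apply (Set.finite_Icc 1 D).subset
      rintro x ⟨n, ⟨hn1, hnD⟩, rfl⟩
      exact ⟨ekg_pos ha hn1, hnD⟩
    · intro i hi j hj hij
      by_contra h
      rcases Nat.lt_or_ge i j with hlt | hge
      · exact ekg_inj ha hi.1 hlt hij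
      · have : j < i := by omega
        exact ekg_inj ha hj.1 this hij.symm
  obtain ⟨B, hB⟩ := hfin.bddAbove
  refine ⟨B + 1, fun n hn => ?_⟩
  by_contra h
  have hmem : n ∈ {n : ℕ | 1 ≤ n ∧ a n ≤ D} := ⟨by omega, by omega⟩
  have := hB hmem
  omega

/-- Key bound: if `p` divides no term from `N` on, then whenever a prime `q`
divides `a n` (`n ≥ N`), the next term is at most `p * q * N`. -/
lemma ekg_bound (ha : IsEKG a) {p N : ℕ} (hp : p.Prime) (hN : 3 ≤ N)
    (hpd : ∀ n, N ≤ n → ¬ p ∣ a n) {n q : ℕ} (hn : N ≤ n) (hq : q.Prime)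
    (hqd : q ∣ a n) : a (n + 1) ≤ p * q * N := by
  have hpq : 0 < p * q := Nat.mul_pos hp.pos hq.pos
  -- pigeonhole: some p*q*j with 1 ≤ j ≤ N is never a term
  have hns : ¬ ((Finset.Icc 1 N).image (fun j => p * q * j) ⊆
      (Finset.Icc 1 (N - 1)).image a) := by
    intro hsub
    have h1 := Finset.card_le_card hsub
    rw [Finset.card_image_of_injective _ (mul_right_injective₀ hpq.ne')] at h1
    have h3 := Finset.card_image_le (s := Finset.Icc 1 (N - 1)) (f := a)
    simp [Nat.card_Icc] at h1 h3
    omega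
  obtain ⟨x, hxS, hxT⟩ := Finset.not_subset.mp hns
  obtain ⟨j, hj, rfl⟩ := Finset.mem_image.mp hxS
  rw [Finset.mem_Icc] at hj
  have hunused : ∀ i, 1 ≤ i → i ≤ n → a i ≠ p * q * j := by
    intro i h1 h2 heq
    have hiN : i < N := by
      by_contra h
      exact hpd i (by omega) (heq ▸ ⟨q * j, by ring⟩)
    exact hxT (Finset.mem_image.mpr ⟨i, Finset.mem_Icc.mpr ⟨h1, by omega⟩, heq⟩)
  have hposx : 0 < p * q * j := Nat.mul_pos hpq (by omega)
  have hgcd : 1 < Nat.gcd (p * q * j) (a n) := by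
    have hqg : q ∣ Nat.gcd (p * q * j) (a n) :=
      Nat.dvd_gcd ⟨p * j, by ring⟩ hqd
    have h1 := Nat.le_of_dvd (Nat.gcd_pos_of_pos_left _ hposx) hqg
    have := hq.two_le
    omega
  have hmem : p * q * j ∈ {m : ℕ | 0 < m ∧ (∀ i, 1 ≤ i → i ≤ n → a i ≠ m) ∧
      1 < Nat.gcd m (a n)} := ⟨hposx, hunused, hgcd⟩
  have hle := (ha.2.2 n (by omega)).2 hmem
  have : p * q * j ≤ p * q * N := Nat.mul_le_mul_left _ hj.2
  omega

/-- Every prime divides infinitely many terms. -/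
lemma ekg_infdvd (ha : IsEKG a) {p : ℕ} (hp : p.Prime) (M : ℕ) :
    ∃ n, M ≤ n ∧ p ∣ a n := by
  by_contra hcon
  push_neg at hcon
  set N := max M 3 with hNdef
  have hN3 : 3 ≤ N := le_max_right _ _
  have hpd : ∀ n, N ≤ n → ¬ p ∣ a n := fun n hn =>
    hcon n (le_trans (le_max_left _ _) hn)
  by_cases hB : ∀ K, ∃ n, K ≤ n ∧ (a n).minFac ≤ p * N
  · -- minFac bounded infinitely often: bounded values infinitely often
    obtain ⟨N2, hN2⟩ := ekg_gt ha (p * (p * N) * N)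
    obtain ⟨n, hn, hmf⟩ := hB (max N N2)
    have hnN : N ≤ n := le_trans (le_max_left _ _) hn
    have h2 : 2 ≤ a n := ekg_two_le ha (by omega)
    have hqp : (a n).minFac.Prime := Nat.minFac_prime (by omega)
    have hb := ekg_bound ha hp hN3 hpd hnN hqp (Nat.minFac_dvd _)
    have h3 : p * (a n).minFac * N ≤ p * (p * N) * N :=
      Nat.mul_le_mul_right N (Nat.mul_le_mul_left p hmf)
    have h4 := hN2 (n + 1) (by
      have := le_trans (le_max_right N N2) hn; omega)
    omega
  · push_neg at hB
    obtain ⟨K, hK⟩ := hB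
    set n := max K N with hndef
    have hnN : N ≤ n := le_max_right _ _
    have hmf : ∀ k, n ≤ k → p * N < (a k).minFac := fun k hk =>
      hK k (le_trans (le_max_left _ _) hk)
    have hg : 1 < Nat.gcd (a (n + 1)) (a n) :=
      (ekg_mem ha (show 2 ≤ n by omega)).2.2
    set r := (Nat.gcd (a (n + 1)) (a n)).minFac with hrdef
    have hrp : r.Prime := Nat.minFac_prime (by omega)
    have hrd1 : r ∣ a (n + 1) := (Nat.minFac_dvd _).trans (Nat.gcd_dvd_left _ _)
    have hrd0 : r ∣ a n := (Nat.minFac_dvd _).trans (Nat.gcd_dvd_right _ _)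
    have h2an : 2 ≤ a n := ekg_two_le ha (by omega)
    have hrbig : p * N < r :=
      lt_of_lt_of_le (hmf n le_rfl) (Nat.minFac_le_of_dvd hrp.two_le hrd0)
    have hb1 : a (n + 1) ≤ p * r * N := ekg_bound ha hp hN3 hpd hnN hrp hrd0
    obtain ⟨t, ht⟩ := hrd1
    have hpos1 : 0 < a (n + 1) := ekg_pos ha (by omega)
    have htle : t ≤ p * N := by
      have h1 : r * t ≤ r * (p * N) := by
        rw [← ht]
        calc a (n + 1) ≤ p * r * N := hb1
          _ = r * (p * N) := by ring
      exact Nat.le_of_mul_le_mul_left h1 hrp.pos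
    have ht1 : t = 1 := by
      by_contra h
      have ht0 : t ≠ 0 := by rintro rfl; simp [ht] at hpos1
      have ht2 : 2 ≤ t := by omega
      have htp : t.minFac.Prime := Nat.minFac_prime (by omega)
      have hdvd : t.minFac ∣ a (n + 1) := (Nat.minFac_dvd t).trans ⟨r, by rw [ht]; ring⟩
      have h5 : (a (n + 1)).minFac ≤ t.minFac := Nat.minFac_le_of_dvd htp.two_le hdvd
      have h6 : t.minFac ≤ t := Nat.minFac_le (by omega)
      have h7 := hmf (n + 1) (by omega)
      omega
    have hr1 : a (n + 1) = r := by rw [ht, ht1, mul_one]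
    -- second step
    have hg2 : 1 < Nat.gcd (a (n + 2)) (a (n + 1)) :=
      (ekg_mem ha (show 2 ≤ n + 1 by omega)).2.2
    have hrd2 : r ∣ a (n + 2) := by
      have hd : Nat.gcd (a (n + 2)) (a (n + 1)) ∣ r := hr1 ▸ Nat.gcd_dvd_right _ _
      have heq : Nat.gcd (a (n + 2)) (a (n + 1)) = r :=
        ((Nat.dvd_prime hrp).mp hd).resolve_left (by omega)
      exact heq ▸ Nat.gcd_dvd_left _ _
    have hb2 : a (n + 2) ≤ p * r * N :=
      ekg_bound ha hp hN3 hpd (show N ≤ n + 1 by omega) hrp ⟨t, ht⟩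
    obtain ⟨s, hs⟩ := hrd2
    have hpos2 : 0 < a (n + 2) := ekg_pos ha (by omega)
    have hsle : s ≤ p * N := by
      have h1 : r * s ≤ r * (p * N) := by
        rw [← hs]
        calc a (n + 2) ≤ p * r * N := hb2
          _ = r * (p * N) := by ring
      exact Nat.le_of_mul_le_mul_left h1 hrp.pos
    have hs2 : 2 ≤ s := by
      have hne : a (n + 1) ≠ a (n + 2) := ekg_inj ha (by omega) (by omega)
      have hs0 : s ≠ 0 := by rintro rfl; simp [hs] at hpos2
      have hs1 : s ≠ 1 := by
        rintro rfl
        exact hne (by rw [hr1, hs, mul_one])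
      omega
    have hsp : s.minFac.Prime := Nat.minFac_prime (by omega)
    have hdvd : s.minFac ∣ a (n + 2) := (Nat.minFac_dvd s).trans ⟨r, by rw [hs]; ring⟩
    have h5 : (a (n + 2)).minFac ≤ s.minFac := Nat.minFac_le_of_dvd hsp.two_le hdvd
    have h6 : s.minFac ≤ s := Nat.minFac_le (by omega)
    have h7 := hmf (n + 2) (by omega)
    omega

end EKGAux

theorem ekg_surjective (a : ℕ → ℕ) (ha : IsEKG a) :
    (∀ m : ℕ, 1 ≤ m → ∃ n : ℕ, 1 ≤ n ∧ a n = m) ∧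
      Set.BijOn a {n : ℕ | 1 ≤ n} {m : ℕ | 1 ≤ m} := by
  have hsurj : ∀ m : ℕ, 1 ≤ m → ∃ n : ℕ, 1 ≤ n ∧ a n = m := by
    intro m hm
    by_contra hcon
    push_neg at hcon
    have hm2 : 2 ≤ m := by
      rcases Nat.lt_or_ge m 2 with h | h
      · have hm1 : m = 1 := by omega
        exact absurd (hm1 ▸ ha.1) (hcon 1 le_rfl)
      · exact h
    have hp : m.minFac.Prime := Nat.minFac_prime (by omega)
    obtain ⟨N0, hN0⟩ := ekg_gt ha m
    set N := max N0 3 with hNdef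
    have hgt : ∀ n, N ≤ n → m < a n := fun n hn =>
      hN0 n (le_trans (le_max_left _ _) hn)
    have hpd : ∀ n, N ≤ n → ¬ m.minFac ∣ a n := by
      intro n hn hdvd
      have hg : 1 < Nat.gcd m (a n) := by
        have hdg : m.minFac ∣ Nat.gcd m (a n) := Nat.dvd_gcd (Nat.minFac_dvd m) hdvd
        have h1 := Nat.le_of_dvd (Nat.gcd_pos_of_pos_left _ (by omega)) hdg
        have := hp.two_le
        omega
      have hmem : m ∈ {m' : ℕ | 0 < m' ∧ (∀ i, 1 ≤ i → i ≤ n → a i ≠ m') ∧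
          1 < Nat.gcd m' (a n)} := ⟨by omega, fun i hi _ => hcon i hi, hg⟩
      have hle := (ha.2.2 n (by
        have := le_max_right N0 3; omega)).2 hmem
      have := hgt (n + 1) (by omega)
      omega
    obtain ⟨n, hn, hdvd⟩ := ekg_infdvd ha hp N
    exact hpd n hn hdvd
  refine ⟨hsurj, fun n hn => ekg_pos ha hn, ?_, ?_⟩
  · intro i hi j hj hij
    by_contra h
    rcases Nat.lt_or_ge i j with hlt | hge
    · exact ekg_inj ha hi hlt hij
    · have : j < i := by omega
      exact ekg_inj ha hj this hij.symm
  · intro m hm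
    obtain ⟨n, hn, he⟩ := hsurj m hm
    exact ⟨n, hn, he⟩
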